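/- Let X be a real m×n matrix with singular value decomposition, and let P_k = Σ_{i=1}^k v_i ⊗ v_i be the orthogonal projection onto the span of the first k left singular vectors of X. Then for every real m×m matrix P of rank at most k, ‖X − P_k X‖_F ≤ ‖X − P X‖_F (Eckart–Young theorem in Frobenius norm for projections). -/

import Mathlib

open Matrix Finset

noncomputable def frobNorm {m n : Type*} [Fintype m] [Fintype n]
    (X : Matrix m n ℝ) : ℝ := Real.sqrt (∑ i, ∑ j, (X i j) ^ 2)

local notation "⟪" x ", " y "⟫" => @inner ℝ _ _ x y

/-- squared Frobenius norm is invariant under left/right multiplication by orthogonal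
matrices. -/
private lemma frobSq_trace {m n : ℕ} (A : Matrix (Fin m) (Fin n) ℝ) :
    ∑ i, ∑ j, (A i j) ^ 2 = (Aᵀ * A).trace := by
  rw [Matrix.trace, Finset.sum_comm]
  simp [Matrix.mul_apply, Matrix.diag, sq]

private lemma frobSq_unitary {m n : ℕ} {U : Matrix (Fin m) (Fin m) ℝ}
    {W : Matrix (Fin n) (Fin n) ℝ} (hU : Uᵀ * U = 1) (hW : Wᵀ * W = 1)
    (M : Matrix (Fin m) (Fin n) ℝ) :
    ∑ i, ∑ j, ((U * M * Wᵀ) i j) ^ 2 = ∑ i, ∑ j, (M i j) ^ 2 := by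
  rw [frobSq_trace, frobSq_trace]
  have h1 : (U * M * Wᵀ)ᵀ * (U * M * Wᵀ) = W * (Mᵀ * (M * Wᵀ)) := by
    simp only [Matrix.transpose_mul, Matrix.transpose_transpose, Matrix.mul_assoc]
    rw [← Matrix.mul_assoc Uᵀ U, hU, Matrix.one_mul]
  rw [h1, Matrix.trace_mul_comm, Matrix.mul_assoc, Matrix.mul_assoc, hW, Matrix.mul_one]

/-- counting lemma -/
private lemma sum_indicator_lt {m k : ℕ} (hk : k ≤ m) :
    ∑ i : Fin m, (if (i : ℕ) < k then (1 : ℝ) else 0) = k := by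
  rw [Finset.sum_boole]
  norm_num
  congr 1
  have : (Finset.univ.filter (fun i : Fin m => (i : ℕ) < k)) =
      (Finset.range k).attachFin (fun x hx => lt_of_lt_of_le (Finset.mem_range.mp hx) hk) := by
    ext i
    simp [Finset.mem_attachFin]
  rw [this, Finset.card_attachFin, Finset.card_range]

/-- the exchange/rearrangement lemma. -/
private lemma exchange {m k : ℕ} (τ c : Fin m → ℝ) (hτ0 : ∀ i, 0 ≤ τ i)
    (hτa : ∀ i j : Fin m, i ≤ j → τ j ≤ τ i)
    (hc0 : ∀ i, 0 ≤ c i) (hc1 : ∀ i, c i ≤ 1) (hsum : ∑ i : Fin m, c i ≤ (k : ℝ)) :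
    ∑ i : Fin m, c i * τ i ≤ ∑ i : Fin m, (if (i : ℕ) < k then τ i else 0) := by
  by_cases hk : m ≤ k
  · have : ∀ i : Fin m, (if (i : ℕ) < k then τ i else 0) = τ i := fun i => by
      rw [if_pos (lt_of_lt_of_le i.isLt hk)]
    simp only [this]
    exact Finset.sum_le_sum fun i _ => by nlinarith [hτ0 i, hc1 i]
  · push_neg at hk
    set t : ℝ := τ ⟨k, hk⟩ with ht
    have key : ∀ i : Fin m,
        c i * τ i - (if (i : ℕ) < k then τ i else 0) ≤
          (c i - (if (i : ℕ) < k then (1:ℝ) else 0)) * t := by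
      intro i
      by_cases h : (i : ℕ) < k
      · rw [if_pos h, if_pos h]
        have hti : t ≤ τ i := hτa i ⟨k, hk⟩ (by simp [Fin.le_def, le_of_lt h])
        nlinarith [hc1 i]
      · rw [if_neg h, if_neg h]
        have hti : τ i ≤ t := hτa ⟨k, hk⟩ i (by simp [Fin.le_def, not_lt.mp h])
        nlinarith [hc0 i]
    have h2 : ∑ i, (c i - (if (i : ℕ) < k then (1:ℝ) else 0)) * t ≤ 0 := by
      rw [← Finset.sum_mul, Finset.sum_sub_distrib, sum_indicator_lt (le_of_lt hk)]
      have h3 : 0 ≤ t := hτ0 _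
      nlinarith [hsum]
    have := Finset.sum_le_sum (fun i (_ : i ∈ Finset.univ) => key i)
    rw [Finset.sum_sub_distrib] at this
    linarith

/-- best approximation from a span of an orthonormal family, lower bound. -/
private lemma approx_lower {E : Type*} [NormedAddCommGroup E] [InnerProductSpace ℝ E]
    {r : ℕ} {q : Fin r → E} (hq : Orthonormal ℝ q) (x : E) (t : Fin r → ℝ) :
    ⟪x, x⟫ - ∑ a, ⟪q a, x⟫ ^ 2 ≤
      ⟪x - ∑ a, t a • q a, x - ∑ a, t a • q a⟫ := by
  set y := ∑ a, t a • q a with hy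
  have hxy : ⟪x, y⟫ = ∑ a, t a * ⟪q a, x⟫ := by
    rw [hy, inner_sum]
    exact Finset.sum_congr rfl fun a _ => by
      rw [real_inner_smul_right, real_inner_comm]
  have hyy : ⟪y, y⟫ = ∑ a, (t a) ^ 2 := by
    rw [hy, inner_sum]
    refine Finset.sum_congr rfl fun a _ => ?_
    rw [real_inner_smul_right, sum_inner]
    rw [Finset.sum_eq_single a]
    · rw [real_inner_smul_left, orthonormal_iff_ite.mp hq a a]; simp [sq]
    · intro b _ hb
      rw [real_inner_smul_left, orthonormal_iff_ite.mp hq b a, if_neg hb, mul_zero]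
    · simp
  rw [real_inner_sub_sub_self, hxy, hyy]
  have h := Finset.sum_nonneg (fun a (_ : a ∈ Finset.univ) =>
    sq_nonneg (t a - ⟪q a, x⟫))
  have hexp : ∑ a, (t a - ⟪q a, x⟫) ^ 2 =
      ∑ a, (t a)^2 - 2 * ∑ a, t a * ⟪q a, x⟫ + ∑ a, ⟪q a, x⟫ ^ 2 := by
    rw [Finset.mul_sum, ← Finset.sum_sub_distrib, ← Finset.sum_add_distrib]
    exact Finset.sum_congr rfl fun a _ => by ring
  rw [hexp] at h
  linarith


/-- Expanding a squared linear combination against a family with orthogonal rows. -/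
private lemma sum_sq_comb {ι κ : Type*} [Fintype ι] [Fintype κ] [DecidableEq ι]
    {A : ι → κ → ℝ} {d : ι → ℝ}
    (h : ∀ i i', ∑ j, A i j * A i' j = if i = i' then d i else 0)
    (w : ι → ℝ) :
    ∑ j : κ, (∑ i, w i * A i j) ^ 2 = ∑ i, (w i) ^ 2 * d i := by
  calc ∑ j : κ, (∑ i, w i * A i j) ^ 2
      = ∑ j : κ, ∑ i, ∑ i', (w i * w i') * (A i j * A i' j) := by
        refine Finset.sum_congr rfl fun j _ => ?_
        rw [sq, Finset.sum_mul_sum]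
        exact Finset.sum_congr rfl fun i _ => Finset.sum_congr rfl fun i' _ => by ring
    _ = ∑ i, ∑ i', (w i * w i') * ∑ j, A i j * A i' j := by
        rw [Finset.sum_comm]
        refine Finset.sum_congr rfl fun i _ => ?_
        rw [Finset.sum_comm]
        exact Finset.sum_congr rfl fun i' _ => by rw [Finset.mul_sum]
    _ = ∑ i, (w i) ^ 2 * d i := by
        refine Finset.sum_congr rfl fun i _ => ?_
        simp_rw [h]
        rw [Finset.sum_eq_single i]
        · simp [sq]
        · intro b _ hb; rw [if_neg (Ne.symm hb), mul_zero]
        · simp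

private lemma stepB {m n k : ℕ} (U : Matrix (Fin m) (Fin m) ℝ) (S : Matrix (Fin m) (Fin n) ℝ)
    (W : Matrix (Fin n) (Fin n) ℝ) (τ : Fin m → ℝ)
    (hU : Uᵀ * U = 1) (hW : Wᵀ * W = 1)
    (hS : ∀ i i' : Fin m, ∑ j, S i j * S i' j = if i = i' then τ i else 0)
    (hτ0 : ∀ i, 0 ≤ τ i) (hτa : ∀ i j : Fin m, i ≤ j → τ j ≤ τ i)
    (P : Matrix (Fin m) (Fin m) ℝ) (hP : P.rank ≤ k) :
    (∑ i, ∑ j, (S i j) ^ 2) - (∑ i : Fin m, if (i : ℕ) < k then τ i else 0)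
      ≤ ∑ i, ∑ j, (((U * S * Wᵀ) - P * (U * S * Wᵀ)) i j) ^ 2 := by
  classical
  set X : Matrix (Fin m) (Fin n) ℝ := U * S * Wᵀ with hX
  have hUU : U * Uᵀ = 1 := mul_eq_one_comm.mp hU
  -- the subspace : image of the range of P inside Euclidean space
  set e : (Fin m → ℝ) ≃ₗ[ℝ] EuclideanSpace ℝ (Fin m) :=
    (WithLp.linearEquiv 2 ℝ (Fin m → ℝ)).symm with he
  set Sub : Submodule ℝ (EuclideanSpace ℝ (Fin m)) :=
    (LinearMap.range P.mulVecLin).map (e : (Fin m → ℝ) →ₗ[ℝ] EuclideanSpace ℝ (Fin m)) with hSub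
  have hfr : Module.finrank ℝ Sub = P.rank := LinearEquiv.finrank_map_eq e _
  set r := Module.finrank ℝ Sub with hr
  have hrk : r ≤ k := by exact hfr.trans_le hP
  set b := stdOrthonormalBasis ℝ Sub with hb
  set q : Fin r → EuclideanSpace ℝ (Fin m) := fun a => (b a : EuclideanSpace ℝ (Fin m)) with hqdef
  have hq : Orthonormal ℝ q := by
    rw [orthonormal_iff_ite]
    intro a c
    rw [hqdef]
    rw [← Submodule.coe_inner]
    exact orthonormal_iff_ite.mp b.orthonormal a c
  -- columns
  set x : Fin n → EuclideanSpace ℝ (Fin m) := fun j => e (fun i => X i j) with hx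
  set y : Fin n → EuclideanSpace ℝ (Fin m) := fun j => e (fun i => (P * X) i j) with hy
  have happ : ∀ (f : Fin m → ℝ) (i : Fin m), e f i = f i := fun f i => rfl
  have hyS : ∀ j, y j ∈ Sub := by
    intro j
    refine Submodule.mem_map_of_mem ?_
    exact ⟨fun i => X i j, by ext i; simp [Matrix.mulVecLin_apply, Matrix.mulVec, Matrix.mul_apply, dotProduct]⟩
  have hrep : ∀ j, ∃ t : Fin r → ℝ, y j = ∑ a, t a • q a := by
    intro j
    refine ⟨fun a => b.repr ⟨y j, hyS j⟩ a, ?_⟩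
    have h1 := b.sum_repr ⟨y j, hyS j⟩
    have h2 := congrArg (Submodule.subtype Sub) h1
    simp only [map_sum, _root_.map_smul] at h2
    exact h2.symm
  -- per-column inequality
  have colIneq : ∀ j, (∑ i, (X i j) ^ 2) - ∑ a, (⟪q a, x j⟫ : ℝ) ^ 2
      ≤ ∑ i, ((X - P * X) i j) ^ 2 := by
    intro j
    obtain ⟨t, ht⟩ := hrep j
    have h := approx_lower hq (x j) t
    rw [← ht] at h
    have hxx : (⟪x j, x j⟫ : ℝ) = ∑ i, (X i j) ^ 2 := by
      rw [PiLp.inner_apply]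
      exact Finset.sum_congr rfl fun i _ => by
        rw [hx]; simp [RCLike.inner_apply, sq, happ]
    have hsub : (⟪x j - y j, x j - y j⟫ : ℝ) = ∑ i, ((X - P * X) i j) ^ 2 := by
      rw [PiLp.inner_apply]
      refine Finset.sum_congr rfl fun i _ => ?_
      have : (x j - y j) i = (X - P * X) i j := by
        rw [PiLp.sub_apply, hx, hy]
        simp [Matrix.sub_apply, happ]
      rw [this]; simp [RCLike.inner_apply, sq]
    rw [hxx, hsub] at h
    exact h
  -- inner products as matrix sums
  have hinner_x : ∀ a j, (⟪q a, x j⟫ : ℝ) = ∑ i' : Fin m, q a i' * X i' j := by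
    intro a j
    rw [PiLp.inner_apply]
    exact Finset.sum_congr rfl fun i' _ => by rw [hx]; simp [RCLike.inner_apply, happ, mul_comm]
  -- the coefficients
  set g : Fin r → Fin m → ℝ := fun a i => ∑ i' : Fin m, q a i' * U i' i with hg
  set c : Fin m → ℝ := fun i => ∑ a, (g a i) ^ 2 with hc
  have hUorth : ∀ i i' : Fin m, ∑ i'' : Fin m, U i i'' * U i' i'' = if i = i' then 1 else 0 := by
    intro i i'
    have := congrArg (fun M => M i i') hUU
    simpa [Matrix.mul_apply, Matrix.transpose_apply, Matrix.one_apply] using this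
  have hUcol : ∀ i i' : Fin m, ∑ i'' : Fin m, U i'' i * U i'' i' = if i = i' then 1 else 0 := by
    intro i i'
    have := congrArg (fun M => M i i') hU
    simpa [Matrix.mul_apply, Matrix.transpose_apply, Matrix.one_apply] using this
  have hWcol : ∀ l l' : Fin n, ∑ j : Fin n, W j l * W j l' = if l = l' then 1 else 0 := by
    intro l l'
    have := congrArg (fun M => M l l') hW
    simpa [Matrix.mul_apply, Matrix.transpose_apply, Matrix.one_apply] using this
  -- key spectral computation
  have hspec : ∀ a, ∑ j, (⟪q a, x j⟫ : ℝ) ^ 2 = ∑ i : Fin m, (g a i) ^ 2 * τ i := by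
    intro a
    have hrewrite : ∀ j, (⟪q a, x j⟫ : ℝ) = ∑ l : Fin n, (∑ i : Fin m, g a i * S i l) * W j l := by
      intro j
      rw [hinner_x]
      have hXent : ∀ i' : Fin m, X i' j = ∑ l : Fin n, (∑ i : Fin m, U i' i * S i l) * W j l := by
        intro i'
        rw [hX]
        simp [Matrix.mul_apply, Matrix.transpose_apply]
      simp_rw [hXent, Finset.mul_sum]
      rw [Finset.sum_comm]
      refine Finset.sum_congr rfl fun l _ => ?_
      simp only [hg, Finset.mul_sum, Finset.sum_mul]
      rw [Finset.sum_comm]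
      exact Finset.sum_congr rfl fun i _ => Finset.sum_congr rfl fun i' _ => by ring
    simp_rw [hrewrite]
    rw [sum_sq_comb (fun l l' => hWcol l l')]
    simp_rw [mul_one]
    exact sum_sq_comb (fun i i' => hS i i') (g a)
  -- c i ≤ 1 via Bessel
  have hc1 : ∀ i, c i ≤ 1 := by
    intro i
    set u : EuclideanSpace ℝ (Fin m) := e (fun i' => U i' i) with hu
    have hbessel := hq.sum_inner_products_le (s := Finset.univ) u
    have hnorm : ‖u‖ ^ 2 = 1 := by
      rw [← real_inner_self_eq_norm_sq, PiLp.inner_apply]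
      have : ∀ i' : Fin m, (⟪u i', u i'⟫ : ℝ) = U i' i * U i' i := fun i' => by
        rw [hu]; simp [RCLike.inner_apply, happ, sq]
      simp_rw [this]
      rw [hUcol i i, if_pos rfl]
    have hterm : ∀ a, ‖(⟪q a, u⟫ : ℝ)‖ ^ 2 = (g a i) ^ 2 := by
      intro a
      have : (⟪q a, u⟫ : ℝ) = g a i := by
        rw [PiLp.inner_apply, hg]
        exact Finset.sum_congr rfl fun i' _ => by rw [hu]; simp [RCLike.inner_apply, happ, mul_comm]
      rw [this, Real.norm_eq_abs, sq_abs]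
    rw [hnorm] at hbessel
    simp_rw [hterm] at hbessel
    exact hbessel
  have hc0 : ∀ i, 0 ≤ c i := fun i => Finset.sum_nonneg fun a _ => sq_nonneg _
  -- total mass of c
  have hcsum : ∑ i : Fin m, c i ≤ (k : ℝ) := by
    have hnq : ∀ a, ∑ i' : Fin m, (q a i') ^ 2 = 1 := by
      intro a
      have h1 : (⟪q a, q a⟫ : ℝ) = 1 := by
        rw [real_inner_self_eq_norm_sq, hq.1 a, one_pow]
      rw [PiLp.inner_apply] at h1
      rw [← h1]
      exact Finset.sum_congr rfl fun i' _ => by simp [RCLike.inner_apply, sq]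
    have h2 : ∀ a, ∑ i : Fin m, (g a i) ^ 2 = 1 := by
      intro a
      simp only [hg]
      rw [sum_sq_comb (fun i i' => hUorth i i') (fun i' => q a i')]
      simp_rw [mul_one]
      exact hnq a
    rw [hc]
    rw [Finset.sum_comm]
    simp_rw [h2]
    simp only [Finset.sum_const, Finset.card_univ, Fintype.card_fin, nsmul_eq_mul, mul_one]
    exact_mod_cast hrk
  -- exchange
  have hex : ∑ i : Fin m, c i * τ i ≤ ∑ i : Fin m, (if (i : ℕ) < k then τ i else 0) :=
    exchange τ c hτ0 hτa hc0 hc1 hcsum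
  -- assemble
  have hsumIneq := Finset.sum_le_sum (fun j (_ : j ∈ Finset.univ) => colIneq j)
  rw [Finset.sum_sub_distrib] at hsumIneq
  have hFS : ∑ i, ∑ j, (S i j) ^ 2 = ∑ j, ∑ i, (X i j) ^ 2 := by
    have h1 := frobSq_unitary hU hW S
    rw [← hX] at h1
    rw [← h1]
    exact Finset.sum_comm
  have hG : ∑ j, ∑ a, (⟪q a, x j⟫ : ℝ) ^ 2 = ∑ i : Fin m, c i * τ i := by
    rw [Finset.sum_comm]
    simp_rw [hspec]
    rw [Finset.sum_comm]
    refine Finset.sum_congr rfl fun i _ => ?_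
    simp only [hc]
    rw [Finset.sum_mul]
  have hswap : ∑ j, ∑ i, ((X - P * X) i j) ^ 2 = ∑ i, ∑ j, ((X - P * X) i j) ^ 2 :=
    Finset.sum_comm
  rw [hG] at hsumIneq
  rw [hswap] at hsumIneq
  rw [hFS]
  linarith

/-- Eckart–Young theorem in Frobenius norm for projections: the projection onto the
first `k` left singular vectors achieves the best Frobenius-norm approximation of `X`
among all `m × m` matrices `P` of rank at most `k`. -/
theorem eckart_young_frobenius {m n : ℕ}
    (X : Matrix (Fin m) (Fin n) ℝ)
    (U : Matrix (Fin m) (Fin m) ℝ) (W : Matrix (Fin n) (Fin n) ℝ) (σ : ℕ → ℝ)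
    (hU : Uᵀ * U = 1) (hW : Wᵀ * W = 1)
    (hσnn : ∀ j, 0 ≤ σ j) (hσanti : ∀ j l, j ≤ l → σ l ≤ σ j)
    (hSVD : X = U * (Matrix.of fun (i : Fin m) (j : Fin n) =>
        if (i : ℕ) = (j : ℕ) then σ (i : ℕ) else 0) * Wᵀ)
    (k : ℕ) (Pk : Matrix (Fin m) (Fin m) ℝ)
    (hPk : Pk = ∑ l ∈ Finset.univ.filter (fun l : Fin m => (l : ℕ) < k),
        Matrix.vecMulVec (fun i => U i l) (fun j => U j l)) :
    ∀ P : Matrix (Fin m) (Fin m) ℝ, P.rank ≤ k →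
      frobNorm (X - Pk * X) ≤ frobNorm (X - P * X) := by
  intro P hP
  classical
  set S : Matrix (Fin m) (Fin n) ℝ := Matrix.of fun (i : Fin m) (j : Fin n) =>
      if (i : ℕ) = (j : ℕ) then σ (i : ℕ) else 0 with hSdef
  have hSapp : ∀ (i : Fin m) (j : Fin n), S i j = if (i : ℕ) = (j : ℕ) then σ (i : ℕ) else 0 :=
    fun i j => rfl
  unfold frobNorm
  apply Real.sqrt_le_sqrt
  set τ : Fin m → ℝ := fun i => ∑ j, (S i j) ^ 2 with hτdef
  have hτ_eq : ∀ i : Fin m, τ i = if (i : ℕ) < n then (σ (i : ℕ)) ^ 2 else 0 := by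
    intro i
    by_cases h : (i : ℕ) < n
    · rw [if_pos h, hτdef]
      simp only
      rw [Finset.sum_eq_single (⟨(i : ℕ), h⟩ : Fin n)]
      · simp [hSapp]
      · intro j _ hj
        have hne : ¬((i : ℕ) = (j : ℕ)) := fun hh => hj (Fin.ext hh.symm)
        simp [hSapp, hne]
      · simp
    · rw [if_neg h, hτdef]
      simp only
      refine Finset.sum_eq_zero fun j _ => ?_
      have hne : ¬((i : ℕ) = (j : ℕ)) := fun hh => h (hh ▸ j.isLt)
      simp [hSapp, hne]
  have hτ0 : ∀ i, 0 ≤ τ i := fun i => Finset.sum_nonneg fun j _ => sq_nonneg _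
  have hτa : ∀ i j : Fin m, i ≤ j → τ j ≤ τ i := by
    intro i j hij
    rw [hτ_eq, hτ_eq]
    by_cases hj : (j : ℕ) < n
    · have hi : (i : ℕ) < n := lt_of_le_of_lt (Fin.le_def.mp hij) hj
      rw [if_pos hi, if_pos hj]
      have h1 := hσanti (i : ℕ) (j : ℕ) (Fin.le_def.mp hij)
      nlinarith [hσnn (j : ℕ), hσnn (i : ℕ)]
    · rw [if_neg hj]
      split
      · positivity
      · exact le_refl _
  have hS : ∀ i i' : Fin m, ∑ j, S i j * S i' j = if i = i' then τ i else 0 := by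
    intro i i'
    by_cases h : i = i'
    · subst h
      rw [if_pos rfl, hτdef]
      exact Finset.sum_congr rfl fun j _ => (sq (S i j)).symm ▸ (sq (S i j) ▸ rfl)
    · rw [if_neg h]
      refine Finset.sum_eq_zero fun j _ => ?_
      by_cases h1 : (i : ℕ) = (j : ℕ)
      · have h2 : ¬((i' : ℕ) = (j : ℕ)) := fun h2 => h (Fin.ext (h1.trans h2.symm))
        simp [hSapp, h2]
      · simp [hSapp, h1]
  -- Step A : compute the truncated error exactly
  set d : Fin m → ℝ := fun i => if (i : ℕ) < k then 1 else 0 with hd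
  have hPkU : Pk = U * Matrix.diagonal d * Uᵀ := by
    rw [hPk]
    ext i j
    rw [Matrix.sum_apply, Matrix.mul_apply]
    simp only [Matrix.vecMulVec_apply, Matrix.mul_diagonal, Matrix.transpose_apply]
    rw [Finset.sum_filter]
    refine Finset.sum_congr rfl fun l _ => ?_
    simp only [hd]
    by_cases h : (l : ℕ) < k <;> simp [h]
  have hXPk : X - Pk * X = U * ((1 - Matrix.diagonal d) * S) * Wᵀ := by
    rw [hPkU, hSVD]
    have h1 : U * Matrix.diagonal d * Uᵀ * (U * S * Wᵀ) = U * (Matrix.diagonal d * S) * Wᵀ := by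
      calc U * Matrix.diagonal d * Uᵀ * (U * S * Wᵀ)
          = U * (Matrix.diagonal d * ((Uᵀ * U) * (S * Wᵀ))) := by
            simp only [Matrix.mul_assoc]
        _ = U * (Matrix.diagonal d * S) * Wᵀ := by
            rw [hU, Matrix.one_mul]
            simp only [Matrix.mul_assoc]
    rw [h1, Matrix.sub_mul, Matrix.one_mul, Matrix.mul_sub, Matrix.sub_mul]
  have stepA : ∑ i, ∑ j, ((X - Pk * X) i j) ^ 2
      = (∑ i, ∑ j, (S i j) ^ 2) - (∑ i : Fin m, if (i : ℕ) < k then τ i else 0) := by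
    rw [hXPk, frobSq_unitary hU hW, ← Finset.sum_sub_distrib]
    refine Finset.sum_congr rfl fun i _ => ?_
    have hent : ∀ j, (((1 : Matrix (Fin m) (Fin m) ℝ) - Matrix.diagonal d) * S) i j = (1 - d i) * S i j := by
      intro j
      rw [Matrix.sub_mul, Matrix.one_mul, Matrix.sub_apply, Matrix.diagonal_mul]
      ring
    simp_rw [hent]
    by_cases h : (i : ℕ) < k
    · rw [if_pos h]
      have hdi : d i = 1 := by simp only [hd]; rw [if_pos h]
      rw [hdi]
      simp [hτdef]
    · rw [if_neg h]
      have hdi : d i = 0 := by simp only [hd]; rw [if_neg h]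
      rw [hdi]
      simp [hτdef]
  have hB := stepB U S W τ hU hW hS hτ0 hτa P hP
  rw [← hSVD] at hB
  rw [stepA]
  exact hB
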